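/- Let t, w, r, d ∈ ℕ with r + t ≤ w + 1 and d ≥ 1. Then for all s ≤ t it holds that μ(w,r,s,d) = A(r+s, 2d, s), where A(ν, 2δ, ω) is the maximum size of a binary code of length ν, constant Hamming weight ω, and minimum Hamming distance 2δ. -/
import Mathlib


open scoped BigOperators Classical
open Filter

namespace TandemDup

variable {S : Type} [Fintype S] [DecidableEq S] [Ring S]

/-- A single tandem duplication with window length `k`:
`a = xyz` with `|y| = k` is mapped to `b = xyyz`. -/
def Dup (k : ℕ) (a b : List S) : Prop :=
  ∃ x y z : List S, y.length = k ∧ a = x ++ y ++ z ∧ b = x ++ y ++ y ++ z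

/-- `DescN k t x y` : `y` is a `t`-descendant of `x`. -/
def DescN (k : ℕ) : ℕ → List S → List S → Prop
  | 0, a, b => a = b
  | t + 1, a, b => ∃ c, DescN k t a c ∧ Dup k c b

/-- The set `D^t(x)` of `t`-descendants of `x`. -/
def DSet (k t : ℕ) (x : List S) : Set (List S) := {y | DescN k t x y}

/-- The descendant cone `D^*(x)`. -/
def DStar (k : ℕ) (x : List S) : Set (List S) := ⋃ t : ℕ, DSet k t x

/-- A string of length at least `k` is irreducible if it has no ancestor other than itself. -/
def Irred (k : ℕ) (x : List S) : Prop :=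
  k ≤ x.length ∧ ∀ z : List S, x ∈ DStar k z → z = x

/-- The duplication root `rt(y)`: an irreducible ancestor of `y` (unique, by the theory). -/
noncomputable def rt (k : ℕ) (y : List S) : List S :=
  if h : ∃ x : List S, Irred k x ∧ y ∈ DStar k x then h.choose else y

/-- The (non-anchor part of the) discrete derivative `φ̄(x)`. -/
def phiBar (k : ℕ) (x : List S) : List S :=
  (List.range (x.length - k)).map (fun i => x.getD (i + k) 0 - x.getD i 0)

/-- Hamming weight of a string: the number of its nonzero letters. -/
def wtH (l : List S) : ℕ := (l.filter (fun a => decide (a ≠ 0))).length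

/-- `w(x) := wt_H(φ̄(x))`. -/
def wgt (k : ℕ) (x : List S) : ℕ := wtH (phiBar k x)

/-- `r(x) := (|x| - |rt(x)|)/k`, the number of duplications taking `rt(x)` to `x`. -/
noncomputable def rr (k : ℕ) (x : List S) : ℕ := (x.length - (rt k x).length) / k

/-- The typicality condition on the weight `w`. -/
def wTypical (q k n w : ℕ) : Prop :=
  |(w : ℝ) - (((q : ℝ) - 1) / (q : ℝ)) * ((n : ℝ) - (k : ℝ))| < (n : ℝ) ^ ((3 : ℝ) / 4)

/-- The typicality condition on the number of duplications `r`. -/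
def rTypical (q k n r : ℕ) : Prop :=
  |(r : ℝ) - (((q : ℝ) - 1) / ((q : ℝ) * ((q : ℝ) ^ k - 1))) * ((n : ℝ) - (k : ℝ))|
    < 2 * (n : ℝ) ^ ((3 : ℝ) / 4)

/-- The typical set `typ^n`. -/
def typ (k n : ℕ) : Set (List S) :=
  {x | x.length = n ∧ wTypical (Fintype.card S) k n (wgt k x) ∧
    rTypical (Fintype.card S) k n (rr k x)}

/-- The uncertainty `N_t(m, C)`: the maximal size of `⋂ᵢ D^t(xᵢ)` over pairwise
distinct `x₁, …, x_m ∈ C`. -/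
noncomputable def Nt (k t m : ℕ) (C : Set (List S)) : ℕ :=
  sSup { N : ℕ | ∃ f : Fin m → List S, Function.Injective f ∧ (∀ i, f i ∈ C) ∧
    N = (⋂ i, DSet k t (f i)).ncard }

/-- `S̄_t(u₁, …, u_m) = ⋂ᵢ {v : v ≥ uᵢ, ‖v - uᵢ‖₁ = t}`. -/
def Sbar (w t : ℕ) {m : ℕ} (u : Fin m → (Fin (w + 1) → ℕ)) : Set (Fin (w + 1) → ℕ) :=
  ⋂ i, {v | u i ≤ v ∧ ∑ j, (v j - u i j) = t}

/-- `N̄_t(m, w, r)`. -/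
noncomputable def Nbar (t m w r : ℕ) : ℕ :=
  sSup { N : ℕ | ∃ u : Fin m → (Fin (w + 1) → ℕ), Function.Injective u ∧
    (∀ i, ∑ j, u i j = r) ∧ N = (Sbar w t u).ncard }

/-- The minimum supremum height `σ(m, w, r)`. -/
noncomputable def sigma (m w r : ℕ) : ℕ :=
  sInf { s : ℕ | ∃ u : Fin m → (Fin (w + 1) → ℕ), Function.Injective u ∧
    (∀ i, ∑ j, u i j = r) ∧ (∑ j, Finset.univ.sup fun i => u i j) = r + s }

/-- The lower-bounds set `A_r(u)`. -/
def lbs (w r : ℕ) (u : Fin (w + 1) → ℕ) : Set (Fin (w + 1) → ℕ) :=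
  {v | (∑ j, v j) = r ∧ v ≤ u}

/-- The maximal lower-bounds-set size `μ(w, r, s)`. -/
noncomputable def mu (w r s : ℕ) : ℕ :=
  sSup { N : ℕ | ∃ u : Fin (w + 1) → ℕ, (∑ j, u j) = r + s ∧ N = (lbs w r u).ncard }

/-- Twice the distance `d₁`, i.e. the `ℓ₁`-distance `‖u - v‖₁` on `ℕ^{w+1}`. -/
def l1dist {w : ℕ} (u v : Fin (w + 1) → ℕ) : ℕ :=
  ∑ j, ((u j - v j) + (v j - u j))

/-- `N̄_t(m, w, r, d)`. -/
noncomputable def NbarD (t m w r d : ℕ) : ℕ :=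
  sSup { N : ℕ | ∃ u : Fin m → (Fin (w + 1) → ℕ),
    (∀ i, ∑ j, u i j = r) ∧ (∀ i j, i ≠ j → 2 * d ≤ l1dist (u i) (u j)) ∧
    N = (Sbar w t u).ncard }

/-- `σ(m, w, r, d)`. -/
noncomputable def sigmaD (m w r d : ℕ) : ℕ :=
  sInf { s : ℕ | ∃ u : Fin m → (Fin (w + 1) → ℕ),
    (∀ i, ∑ j, u i j = r) ∧ (∀ i j, i ≠ j → 2 * d ≤ l1dist (u i) (u j)) ∧
    (∑ j, Finset.univ.sup fun i => u i j) = r + s }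

/-- `μ(w, r, s, d)`. -/
noncomputable def muD (w r s d : ℕ) : ℕ :=
  sSup { N : ℕ | ∃ u : Fin (w + 1) → ℕ, (∑ j, u j) = r + s ∧
    ∃ C : Set (Fin (w + 1) → ℕ), C ⊆ lbs w r u ∧
      (∀ v₁ ∈ C, ∀ v₂ ∈ C, v₁ ≠ v₂ → 2 * d ≤ l1dist v₁ v₂) ∧ N = C.ncard }

/-- The duplication distance `d(y₁, y₂)`. -/
noncomputable def distDup (k : ℕ) (y₁ y₂ : List S) : ℕ :=
  sInf {t : ℕ | (DSet k t y₁ ∩ DSet k t y₂).Nonempty}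

/-- `N^typ_t(m, n, d)`. -/
noncomputable def NtypD (k t m n d : ℕ) : ℕ :=
  sSup { N : ℕ | ∃ f : Fin m → List S, (∀ i, f i ∈ typ k n) ∧
    (∀ i j, i ≠ j → d ≤ distDup k (f i) (f j)) ∧
    N = (⋂ i, DSet k t (f i)).ncard }

/-- `A(ν, D, ω)`: the maximum size of a binary code of length `ν`, constant Hamming
weight `ω`, and minimum Hamming distance `D`. -/
noncomputable def Abin (ν D ω : ℕ) : ℕ :=
  sSup { N : ℕ | ∃ C : Set (Fin ν → ZMod 2), (∀ x ∈ C, hammingNorm x = ω) ∧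
    (∀ x ∈ C, ∀ y ∈ C, x ≠ y → D ≤ hammingDist x y) ∧ N = C.ncard }

/-- Zero-run-length representation: `ψ_x(y)` as a list, mapping `φ̄(y)` written as
`0^{u(1)} a₁ 0^{u(2)} … a_w 0^{u(w+1)}` (with the `aᵢ` nonzero) to
`(⌊u(1)/k⌋, …, ⌊u(w+1)/k⌋)`. -/
def psiList (k : ℕ) (y : List S) : List ℕ :=
  ((phiBar k y).splitOnP (fun a => decide (a ≠ 0))).map (fun run => run.length / k)

/-- `ψ_x(y)` as a vector in `ℕ^{w+1}`. -/
def psiVec (k w : ℕ) (y : List S) : Fin (w + 1) → ℕ := fun i => (psiList k y).getD i 0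

/-- `s = ⌈log_n m⌉`. -/
noncomputable def sExp (n m : ℕ) : ℕ := ⌈Real.logb n m⌉₊

/-- The indicator `δ(m, n)` of Theorem 17. -/
noncomputable def deltaTyp (q k n m : ℕ) : ℕ :=
  if ∀ r : ℕ, rTypical q k n r → Nat.choose (r + sExp n m) r < m then 1 else 0

/-- `s = ⌈log_n m⌉ + d - 1`. -/
noncomputable def sExpD (n m d : ℕ) : ℕ := sExp n m + (d - 1)

/-- The indicator `δ(m, n, d)` of Theorem 29. -/
noncomputable def deltaEcc (q k d n m : ℕ) : ℕ :=
  if ∀ r : ℕ, rTypical q k n r → Abin (r + sExpD n m d) (2 * d) (sExpD n m d) < m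
  then 1 else 0


lemma aux_sum_le (n a : ℕ) :
    (∑ i : Fin n, if a ≤ (i : ℕ) then 1 else 0) = n - a := by
  rw [Fin.sum_univ_eq_sum_range (fun i => if a ≤ i then 1 else 0) n, ← Finset.card_filter]
  have : (Finset.range n).filter (fun i => a ≤ i) = Finset.Ico a n := by
    ext i; simp [Finset.mem_range, Finset.mem_Ico]; omega
  rw [this, Nat.card_Ico]

lemma aux_sum_lt (n m : ℕ) (hm : m ≤ n) :
    (∑ i : Fin n, if (i : ℕ) < m then 1 else 0) = m := by
  rw [Fin.sum_univ_eq_sum_range (fun i => if i < m then 1 else 0) n, ← Finset.card_filter]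
  have : (Finset.range n).filter (fun i => i < m) = Finset.Ico 0 m := by
    ext i; simp [Finset.mem_range, Finset.mem_Ico]; omega
  rw [this, Nat.card_Ico]; omega

lemma aux_sum_xor (n a b : ℕ) (ha : a ≤ n) (hb : b ≤ n) :
    (∑ i : Fin n, if ¬((a ≤ (i : ℕ)) ↔ (b ≤ (i : ℕ))) then 1 else 0)
      = (a - b) + (b - a) := by
  rw [Fin.sum_univ_eq_sum_range (fun i => if ¬((a ≤ i) ↔ (b ≤ i)) then 1 else 0) n,
    ← Finset.card_filter]
  have : (Finset.range n).filter (fun i => ¬((a ≤ i) ↔ (b ≤ i)))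
      = Finset.Ico (min a b) (max a b) := by
    ext i; simp [Finset.mem_range, Finset.mem_Ico]; omega
  rw [this, Nat.card_Ico]; omega

lemma zmod2_cases (a : ZMod 2) : a = 0 ∨ a = 1 := by revert a; decide

theorem statement18 (t w r d : ℕ) (h : r + t ≤ w + 1) (hd : 1 ≤ d) :
    ∀ s ≤ t, muD w r s d = Abin (r + s) (2 * d) s := by
  intro s hs
  have hrs : r + s ≤ w + 1 := le_trans (by omega) h
  have hset : { N : ℕ | ∃ u : Fin (w + 1) → ℕ, (∑ j, u j) = r + s ∧
      ∃ C : Set (Fin (w + 1) → ℕ), C ⊆ lbs w r u ∧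
        (∀ v₁ ∈ C, ∀ v₂ ∈ C, v₁ ≠ v₂ → 2 * d ≤ l1dist v₁ v₂) ∧ N = C.ncard }
      = { N : ℕ | ∃ C : Set (Fin (r + s) → ZMod 2), (∀ x ∈ C, hammingNorm x = s) ∧
        (∀ x ∈ C, ∀ y ∈ C, x ≠ y → 2 * d ≤ hammingDist x y) ∧ N = C.ncard } := by
    ext N
    constructor
    · rintro ⟨u, hu, C, hC, hdist, rfl⟩
      have card_eq : Fintype.card (Σ j : Fin (w + 1), Fin (u j))
          = Fintype.card (Fin (r + s)) := by
        simp [Fintype.card_sigma, hu]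
      let e := Fintype.equivOfCardEq card_eq
      set F : (Fin (w + 1) → ℕ) → (Fin (r + s) → ZMod 2) :=
        fun v p => if v (e.symm p).1 ≤ ((e.symm p).2 : ℕ) then 1 else 0 with hF
      have key : ∀ v : Fin (w + 1) → ℕ, ∀ P : ZMod 2 → Prop, ∀ [DecidablePred P],
          ((Finset.univ.filter fun p : Fin (r + s) => P (F v p)).card)
            = ∑ j : Fin (w + 1), ∑ i : Fin (u j),
                if P (if v j ≤ (i : ℕ) then 1 else 0) then 1 else 0 := by
        intro v P _
        rw [Finset.card_filter]
        rw [Fintype.sum_equiv e.symm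
          (fun p => if P (F v p) then 1 else 0)
          (fun σ : (Σ j : Fin (w + 1), Fin (u j)) =>
            if P (if v σ.1 ≤ (σ.2 : ℕ) then 1 else 0) then 1 else 0)
          (fun p => by simp [hF])]
        rw [← Finset.univ_sigma_univ, Finset.sum_sigma]
      have hnorm : ∀ v ∈ lbs w r u, hammingNorm (F v) = s := by
        rintro v ⟨hvsum, hvle⟩
        have : hammingNorm (F v) = ∑ j : Fin (w + 1), (u j - v j) := by
          rw [hammingNorm, key v (fun a => a ≠ 0)]
          refine Finset.sum_congr rfl fun j _ => ?_
          rw [show (∑ i : Fin (u j), if (if v j ≤ (i:ℕ) then (1 : ZMod 2) else 0) ≠ 0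
              then 1 else 0) = ∑ i : Fin (u j), if v j ≤ (i:ℕ) then 1 else 0 from
            Finset.sum_congr rfl fun i _ => by by_cases hc : v j ≤ (i:ℕ) <;> simp [hc]]
          exact aux_sum_le _ _
        rw [this]
        have h2 : ∑ j : Fin (w + 1), (u j - v j + v j) = ∑ j, u j :=
          Finset.sum_congr rfl fun j _ => Nat.sub_add_cancel (hvle j)
        rw [Finset.sum_add_distrib] at h2
        omega
      have hdF : ∀ v₁ ∈ lbs w r u, ∀ v₂ ∈ lbs w r u,
          hammingDist (F v₁) (F v₂) = l1dist v₁ v₂ := by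
        rintro v₁ ⟨hs1, hle1⟩ v₂ ⟨hs2, hle2⟩
        rw [hammingDist]
        have : (Finset.univ.filter fun p : Fin (r + s) => F v₁ p ≠ F v₂ p).card
            = ∑ j : Fin (w + 1), ∑ i : Fin (u j),
                if ¬((v₁ j ≤ (i : ℕ)) ↔ (v₂ j ≤ (i : ℕ))) then 1 else 0 := by
          rw [Finset.card_filter]
          rw [Fintype.sum_equiv e.symm
            (fun p => if F v₁ p ≠ F v₂ p then 1 else 0)
            (fun σ : (Σ j : Fin (w + 1), Fin (u j)) =>
              if ¬((v₁ σ.1 ≤ (σ.2 : ℕ)) ↔ (v₂ σ.1 ≤ (σ.2 : ℕ))) then 1 else 0)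
            (fun p => by
              by_cases h1 : v₁ (e.symm p).1 ≤ ((e.symm p).2 : ℕ) <;>
              by_cases h2 : v₂ (e.symm p).1 ≤ ((e.symm p).2 : ℕ) <;>
              simp [hF, h1, h2])]
          rw [← Finset.univ_sigma_univ, Finset.sum_sigma]
        rw [this, l1dist]
        refine Finset.sum_congr rfl fun j _ => ?_
        rw [aux_sum_xor (u j) (v₁ j) (v₂ j) (hle1 j) (hle2 j)]
      refine ⟨F '' C, ?_, ?_, ?_⟩
      · rintro x ⟨v, hvC, rfl⟩; exact hnorm v (hC hvC)
      · rintro x ⟨v₁, h1, rfl⟩ y ⟨v₂, h2, rfl⟩ hne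
        have hv12 : v₁ ≠ v₂ := by rintro rfl; exact hne rfl
        rw [hdF v₁ (hC h1) v₂ (hC h2)]; exact hdist v₁ h1 v₂ h2 hv12
      · rw [Set.ncard_image_of_injOn]
        intro v₁ h1 v₂ h2 hFe
        by_contra hne
        have hge := hdist v₁ h1 v₂ h2 hne
        have h0 : hammingDist (F v₁) (F v₂) = 0 := by rw [hFe]; simp
        rw [hdF v₁ (hC h1) v₂ (hC h2)] at h0
        omega
    · rintro ⟨C, hwt, hdC, rfl⟩
      set G : (Fin (r + s) → ZMod 2) → (Fin (w + 1) → ℕ) :=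
        fun x j => if h' : (j : ℕ) < r + s then (if x ⟨j, h'⟩ = 0 then 1 else 0) else 0
        with hG
      have hreindex : ∀ g : Fin (r + s) → ℕ,
          (∑ j : Fin (w + 1), if h' : (j : ℕ) < r + s then g ⟨(j : ℕ), h'⟩ else 0)
            = ∑ p : Fin (r + s), g p := by
        intro g
        have h1 : (∑ j ∈ Finset.univ.map (Fin.castLEEmb hrs),
            if h' : (j : ℕ) < r + s then g ⟨(j : ℕ), h'⟩ else 0)
            = ∑ j : Fin (w + 1), if h' : (j : ℕ) < r + s then g ⟨(j : ℕ), h'⟩ else 0 := by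
          refine Finset.sum_subset (Finset.subset_univ _) fun j _ hj => ?_
          rw [dif_neg]
          intro hlt
          exact hj (Finset.mem_map.mpr ⟨⟨(j : ℕ), hlt⟩, Finset.mem_univ _, by
            simp [Fin.castLEEmb, Fin.ext_iff]⟩)
        rw [← h1, Finset.sum_map]
        refine Finset.sum_congr rfl fun p _ => ?_
        have hp : ((Fin.castLEEmb hrs p : Fin (w + 1)) : ℕ) < r + s := by
          simp [Fin.castLEEmb]
        rw [dif_pos hp]
        exact congrArg g (Fin.ext (by simp [Fin.castLEEmb]))
      have hsumG : ∀ x ∈ C, (∑ j, G x j) = r := by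
        intro x hx
        rw [show (∑ j, G x j) = ∑ p : Fin (r + s), if x p = 0 then 1 else 0 from by
          rw [hG, hreindex (fun p => if x p = 0 then 1 else 0)]]
        have hw := hwt x hx
        rw [hammingNorm, Finset.card_filter] at hw
        have htot : (∑ p : Fin (r + s), if x p = 0 then 1 else 0)
            + (∑ p : Fin (r + s), if x p ≠ 0 then 1 else 0) = r + s := by
          rw [← Finset.sum_add_distrib]
          rw [show (∑ p : Fin (r + s), ((if x p = 0 then 1 else 0)
              + if x p ≠ 0 then 1 else 0)) = ∑ _p : Fin (r + s), 1 from
            Finset.sum_congr rfl fun p _ => by by_cases hc : x p = 0 <;> simp [hc]]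
          simp
        omega
      have hdG : ∀ x y : Fin (r + s) → ZMod 2, l1dist (G x) (G y) = hammingDist x y := by
        intro x y
        rw [l1dist]
        rw [show (∑ j, (G x j - G y j + (G y j - G x j)))
            = ∑ j : Fin (w + 1), if h' : (j : ℕ) < r + s then
                ((if x ⟨(j:ℕ), h'⟩ = 0 then 1 else 0) - (if y ⟨(j:ℕ), h'⟩ = 0 then 1 else 0)
                + ((if y ⟨(j:ℕ), h'⟩ = 0 then 1 else 0) - (if x ⟨(j:ℕ), h'⟩ = 0 then 1 else 0)))
              else 0 from Finset.sum_congr rfl fun j _ => by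
                by_cases hc : (j : ℕ) < r + s <;> simp [hG, hc]]
        rw [hreindex (fun p => (if x p = 0 then 1 else 0) - (if y p = 0 then 1 else 0)
          + ((if y p = 0 then 1 else 0) - (if x p = 0 then 1 else 0)))]
        rw [hammingDist, Finset.card_filter]
        refine Finset.sum_congr rfl fun p _ => ?_
        rcases zmod2_cases (x p) with h1 | h1 <;> rcases zmod2_cases (y p) with h2 | h2 <;>
          simp [h1, h2]
      refine ⟨fun j => if (j : ℕ) < r + s then 1 else 0, by rw [aux_sum_lt _ _ hrs],
        G '' C, ?_, ?_, ?_⟩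
      · rintro v ⟨x, hx, rfl⟩
        refine ⟨hsumG x hx, fun j => ?_⟩
        by_cases hc : (j : ℕ) < r + s
        · rw [hG]; simp only [hc, dif_pos, if_pos]
          split <;> omega
        · rw [hG]; simp [hc]
      · rintro v₁ ⟨x, hx, rfl⟩ v₂ ⟨y, hy, rfl⟩ hne
        have hxy : x ≠ y := by rintro rfl; exact hne rfl
        rw [hdG]; exact hdC x hx y hy hxy
      · rw [Set.ncard_image_of_injOn]
        intro x hx y hy hGe
        by_contra hne
        have hge := hdC x hx y hy hne
        have h0 : l1dist (G x) (G y) = 0 := by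
          rw [hGe, l1dist]; simp
        rw [hdG] at h0
        omega
  rw [muD, Abin, hset]

end TandemDup
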